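/- arXiv:0803.0156 — 4 statements merged into one kernel-verified Lean document; each statement's English description precedes it below -/
import Mathlib

section
/- Consider a deck with s₁ cards of value 1 and s₂ cards of value 2, uniformly shuffled, with s₁ ≥ s₂ ≥ 0. The player plays m = b₁ + b₂ ≤ s₁ + s₂ rounds, naming value 1 in b₁ rounds and value 2 in b₂ rounds (in any order), and loses if any named value coincides with the drawn card in that round. Then the probability of winning equals C(s₁+s₂-b₁-b₂, s₁-b₂) / C(s₁+s₂, s₁); in particular it is nonzero if and only if b₁ ≤ s₂ and b₂ ≤ s₁. -/
/-- The deck of composition `s` as a list of card values: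
`s[i]` copies of value `i+1`, in a canonical order. -/
def deckList (s : List ℕ) : List ℕ :=
  (List.range s.length).flatMap fun i => List.replicate (s.getD i 0) (i + 1)

/-- `winsAux strat hist m d = true` iff the player using adaptive strategy `strat`
(a function from the list of previously revealed cards to the next bid)
survives `m` rounds when the remaining deck order is `d`, having already seen `hist`. -/
def winsAux (strat : List ℕ → ℕ) : List ℕ → ℕ → List ℕ → Bool
  | _, 0, _ => true
  | _, _ + 1, [] => true
  | hist, m + 1, c :: rest =>
      (strat hist != c) && winsAux strat (hist ++ [c]) m rest

/-- Probability that strategy `strat` wins the `m`-round game against the uniformly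
shuffled `s`-deck: the fraction of the `c!` orderings of the deck on which it wins. -/
def winProb (strat : List ℕ → ℕ) (s : List ℕ) (m : ℕ) : ℚ :=
  (((deckList s).permutations.countP fun d => winsAux strat [] m d) : ℚ)
    / ((deckList s).length.factorial : ℚ)

/-- Number of cards of value `i` remaining from the `s`-deck after the cards in `hist`
have been dealt. -/
def remCount (s : List ℕ) (hist : List ℕ) (i : ℕ) : ℕ :=
  s.getD (i - 1) 0 - hist.count i

/-- The canonical greedy strategy for the `s`-deck: name a least frequent remaining value. -/
def greedyStrat (s : List ℕ) (hist : List ℕ) : ℕ :=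
  (((List.range' 1 s.length)).argmin (remCount s hist)).getD 1

/-- `g m s`: the probability that the greedy strategy wins the `m`-round `s`-game. -/
def g (m : ℕ) (s : List ℕ) : ℚ :=
  winProb (greedyStrat s) s m

/-- `gFull s`: greedy winning probability when all cards are dealt. -/
def gFull (s : List ℕ) : ℚ :=
  g (deckList s).length s

/-- The strategy naming, in order, value `1` `b 1` times, value `2` `b 2` times, etc. -/
def bidStrat (b : List ℕ) (hist : List ℕ) : ℕ :=
  (deckList b).getD hist.length 0

/-- `advProb b s`: winning probability of the advance bid vector `b` against the `s`-deck. -/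
def advProb (b s : List ℕ) : ℚ :=
  winProb (bidStrat b) s b.sum

/-- `s` majorizes `q`: every partial sum of `s` is at least that of `q`. -/
def Majorizes (s q : List ℕ) : Prop :=
  ∀ i, (q.take i).sum ≤ (s.take i).sum

/-- `Pfun s q = ∏_{i : sᵢ > qᵢ} sᵢ (sᵢ-1) ⋯ (qᵢ+1) = ∏_{i : sᵢ > qᵢ} sᵢ!/qᵢ!`. -/
def Pfun (s q : List ℕ) : ℕ :=
  (List.zipWith (fun a b => if b < a then a.factorial / b.factorial else 1) s q).prod

/-- `s` with its `i`-th entry decreased by `1`, re-sorted non-increasingly. -/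
def downAt (s : List ℕ) (i : ℕ) : List ℕ :=
  ((s.set i (s.getD i 0 - 1)).mergeSort fun a b => decide (b ≤ a))

/-- `strat` plays greedily at position `hist`. -/
def GreedyAt (s : List ℕ) (strat : List ℕ → ℕ) (hist : List ℕ) : Prop :=
  strat hist ∈ List.range' 1 s.length ∧
    ∀ j ∈ List.range' 1 s.length, remCount s hist (strat hist) ≤ remCount s hist j

/-- `strat` plays anti-greedily at `hist`: it names a most frequent remaining value. -/
def AntiGreedyAt (s : List ℕ) (strat : List ℕ → ℕ) (hist : List ℕ) : Prop :=
  strat hist ∈ List.range' 1 s.length ∧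
    ∀ j ∈ List.range' 1 s.length, remCount s hist j ≤ remCount s hist (strat hist)

/-- `hist` is a position reachable with positive probability by `strat` in the `m`-round
`s`-game: it is part of the deck, fewer than `m` cards have been dealt, and `strat`
survived all rounds so far. -/
def Reachable (strat : List ℕ → ℕ) (s : List ℕ) (m : ℕ) (hist : List ℕ) : Prop :=
  hist.length < m ∧ List.Subperm hist (deckList s) ∧ winsAux strat [] hist.length hist = true

/-- Binomial coefficient with integer lower index (zero when the lower index is negative). -/
def zchoose (n : ℕ) (k : ℤ) : ℕ :=
  if 0 ≤ k then n.choose k.toNat else 0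

lemma sum_flatMapN {α : Type*} (l : List α) (f : α → List ℕ) :
    (l.flatMap f).sum = (l.map (fun a => (f a).sum)).sum := by
  rw [List.flatMap, List.sum_flatten, List.map_map]; rfl

lemma sum_map_aux (t : ℕ) (F : ℕ → List ℕ → ℕ) (q : List ℕ) :
    ((List.permutations'Aux t q).map (fun e => F e.headI e.tail)).sum
      = F t q + (match q with
          | [] => 0
          | c :: q' => ((List.permutations'Aux t q').map (fun e => F c e)).sum) := by
  cases q with
  | nil => simp [List.permutations'Aux]
  | cons c q' =>
      simp only [List.permutations'Aux, List.map_cons, List.map_map, List.sum_cons]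
      rfl

lemma sumdec : ∀ (ts : List ℕ), ts ≠ [] → ∀ F : ℕ → List ℕ → ℕ,
    (ts.permutations'.map (fun q => F q.headI q.tail)).sum
      = ((List.range ts.length).map
          (fun i => (((ts.eraseIdx i).permutations').map (fun r => F (ts.getD i 0) r)).sum)).sum := by
  intro ts
  induction ts with
  | nil => intro h; exact absurd rfl h
  | cons t rest ih =>
    intro _ F
    have hexp : (t :: rest).permutations' = (rest.permutations').flatMap (List.permutations'Aux t) := rfl
    rw [hexp, List.map_flatMap, sum_flatMapN]
    have h1 : (rest.permutations'.map
        (fun q => ((List.permutations'Aux t q).map (fun e => F e.headI e.tail)).sum)).sum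
      = (rest.permutations'.map (fun q => F t q + (match q with
          | [] => 0
          | c :: q' => ((List.permutations'Aux t q').map (fun e => F c e)).sum))).sum := by
      congr 1
      exact List.map_congr_left (fun q _ => sum_map_aux t F q)
    rw [h1, List.sum_map_add]
    cases rest with
    | nil =>
        simp [List.permutations', List.range_succ]
    | cons c₀ rest₀ =>
      set rest := c₀ :: rest₀ with hrest
      have h2 : (rest.permutations'.map (fun q => (match q with
          | [] => (0:ℕ)
          | c :: q' => ((List.permutations'Aux t q').map (fun e => F c e)).sum))).sum
        = (rest.permutations'.map (fun q =>
            ((List.permutations'Aux t q.tail).map (fun e => F q.headI e)).sum)).sum := by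
        congr 1
        apply List.map_congr_left
        intro q hq
        have hqne : q ≠ [] := by
          intro h
          have := List.mem_permutations'.1 hq
          rw [h] at this
          exact List.cons_ne_nil c₀ rest₀ (this.nil_eq.symm)
        obtain ⟨a, q', rfl⟩ := List.exists_cons_of_ne_nil hqne
        rfl
      rw [h2, ih (by simp [hrest]) (fun c q' => ((List.permutations'Aux t q').map (fun e => F c e)).sum)]
      rw [show (t :: rest).length = rest.length + 1 from rfl, List.range_succ_eq_map]
      simp only [List.map_cons, List.sum_cons, List.map_map]
      have h3 : ∀ j, ((((t :: rest).eraseIdx (j+1)).permutations').map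
            (fun r => F ((t :: rest).getD (j+1) 0) r)).sum
          = (((rest.eraseIdx j).permutations').map (fun q' =>
              ((List.permutations'Aux t q').map (fun e => F (rest.getD j 0) e)).sum)).sum := by
        intro j
        rw [show (t :: rest).eraseIdx (j+1) = t :: rest.eraseIdx j from rfl,
          show (t :: rest.eraseIdx j).permutations'
            = (rest.eraseIdx j).permutations'.flatMap (List.permutations'Aux t) from rfl,
          List.map_flatMap, sum_flatMapN]
        rfl
      have h4 : List.map ((fun i => ((((t :: rest).eraseIdx i).permutations').map
            (fun r => F ((t :: rest).getD i 0) r)).sum) ∘ Nat.succ) (List.range rest.length)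
          = List.map (fun j => (((rest.eraseIdx j).permutations').map (fun q' =>
              ((List.permutations'Aux t q').map (fun e => F (rest.getD j 0) e)).sum)).sum)
            (List.range rest.length) := by
        apply List.map_congr_left
        intro j _
        exact h3 j
      rw [h4]
      rfl

def avoidX : List ℕ → List ℕ → Bool
  | [], _ => true
  | _ :: _, [] => true
  | b :: bs, c :: d => (b != c) && avoidX bs d

lemma countP_eq_sum {α : Type*} (p : α → Bool) (l : List α) :
    l.countP p = (l.map (fun a => if p a then 1 else 0)).sum := by
  induction l with
  | nil => rfl
  | cons a l ih => rw [List.countP_cons, List.map_cons, List.sum_cons, ih]; omega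

lemma countdec (b : ℕ) (bs : List ℕ) (l : List ℕ) (hl : l ≠ []) :
    l.permutations'.countP (avoidX (b :: bs))
      = ((List.range l.length).map (fun i =>
          if b = l.getD i 0 then 0 else (l.eraseIdx i).permutations'.countP (avoidX bs))).sum := by
  rw [countP_eq_sum]
  have h1 : l.permutations'.map (fun d => if avoidX (b :: bs) d then 1 else 0)
      = l.permutations'.map (fun d =>
          (fun c r => if (b != c) && avoidX bs r then 1 else 0) d.headI d.tail) := by
    apply List.map_congr_left
    intro q hq
    have hqne : q ≠ [] := by
      intro h
      have := List.mem_permutations'.1 hq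
      rw [h] at this
      exact hl this.nil_eq.symm
    obtain ⟨a, q', rfl⟩ := List.exists_cons_of_ne_nil hqne
    rfl
  rw [h1]
  refine (sumdec l hl (fun c r => if (b != c) && avoidX bs r then 1 else 0)).trans ?_
  congr 1
  apply List.map_congr_left
  intro i _
  by_cases hb : b = l.getD i 0
  · simp [hb]
  · have hbne : (b != l.getD i 0) = true := by simpa using hb
    simp only [hbne, Bool.true_and, if_neg hb]
    rw [countP_eq_sum]

lemma avoidX_nil (d : List ℕ) : avoidX [] d = true := rfl

def deckTV (s₁ s₂ : ℕ) : List ℕ := List.replicate s₁ 1 ++ List.replicate s₂ 2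

lemma eraseIdx_replicate {n i : ℕ} {a : ℕ} (h : i < n) :
    (List.replicate n a).eraseIdx i = List.replicate (n - 1) a := by
  rw [List.eq_replicate_iff]
  constructor
  · rw [List.length_eraseIdx]; simp [h]
  · intro b hb
    have := List.eraseIdx_subset hb
    exact List.eq_of_mem_replicate this

lemma deckTV_getD_lt {s₁ s₂ i : ℕ} (h : i < s₁) : (deckTV s₁ s₂).getD i 0 = 1 := by
  rw [deckTV, List.getD_eq_getElem _ _ (by simp; omega), List.getElem_append_left (by simpa)]
  simp

lemma deckTV_getD_ge {s₁ s₂ j : ℕ} (h : j < s₂) : (deckTV s₁ s₂).getD (s₁ + j) 0 = 2 := by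
  rw [deckTV, List.getD_eq_getElem _ _ (by simp; omega),
    List.getElem_append_right (by simp)]
  simp

lemma deckTV_erase_lt {s₁ s₂ i : ℕ} (h : i < s₁) :
    (deckTV s₁ s₂).eraseIdx i = deckTV (s₁ - 1) s₂ := by
  rw [deckTV, List.eraseIdx_append_of_lt_length (by simpa), eraseIdx_replicate h]; rfl

lemma deckTV_erase_ge {s₁ s₂ j : ℕ} (h : j < s₂) :
    (deckTV s₁ s₂).eraseIdx (s₁ + j) = deckTV s₁ (s₂ - 1) := by
  rw [deckTV, List.eraseIdx_append_of_length_le (by simp), eraseIdx_replicate (by simpa)]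
  rfl

lemma perms'_length (l : List ℕ) : l.permutations'.length = l.length.factorial := by
  rw [← (l.permutations_perm_permutations').length_eq, List.length_permutations]

lemma countAvoid : ∀ (bids : List ℕ) (s₁ s₂ : ℕ), bids.length ≤ s₁ + s₂ →
    (∀ x ∈ bids, x = 1 ∨ x = 2) →
    (deckTV s₁ s₂).permutations'.countP (avoidX bids)
      = s₁.factorial * s₂.factorial
          * zchoose (s₁ + s₂ - bids.length) ((s₁ : ℤ) - bids.count 2) := by
  intro bids
  induction bids with
  | nil =>
    intro s₁ s₂ _ _
    have h1 : (deckTV s₁ s₂).permutations'.countP (avoidX [])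
        = (deckTV s₁ s₂).permutations'.length :=
      List.countP_eq_length.2 (fun d _ => avoidX_nil d)
    rw [h1, perms'_length, show (deckTV s₁ s₂).length = s₁ + s₂ by simp [deckTV]]
    simp only [List.count_nil, List.length_nil, Nat.sub_zero, Nat.cast_zero, sub_zero]
    rw [zchoose, if_pos (by positivity), Int.toNat_natCast]
    have := Nat.choose_mul_factorial_mul_factorial (Nat.le_add_right s₁ s₂)
    rw [Nat.add_sub_cancel_left] at this
    rw [← this]; ring
  | cons b bs ih =>
    intro s₁ s₂ hlen hvals
    have hpos : 0 < s₁ + s₂ := Nat.lt_of_lt_of_le (Nat.succ_pos _) (by simpa using hlen)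
    have hne : deckTV s₁ s₂ ≠ [] := by
      have hlen2 : (deckTV s₁ s₂).length = s₁ + s₂ := by simp [deckTV]
      intro h; rw [h] at hlen2; simp at hlen2; omega
    rw [countdec b bs _ hne, show (deckTV s₁ s₂).length = s₁ + s₂ by simp [deckTV],
      List.range_add, List.map_append, List.sum_append]
    have hA : ((List.range s₁).map (fun i =>
        if b = (deckTV s₁ s₂).getD i 0 then 0
        else (((deckTV s₁ s₂).eraseIdx i).permutations').countP (avoidX bs))).sum
        = s₁ * (if b = 1 then 0
            else ((deckTV (s₁-1) s₂).permutations').countP (avoidX bs)) := by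
      rw [List.map_congr_left (fun i hi => by
        rw [deckTV_getD_lt (List.mem_range.1 hi), deckTV_erase_lt (List.mem_range.1 hi)])]
      rw [List.map_const', List.sum_replicate, List.length_range, smul_eq_mul]
    have hB : (((List.range s₂).map (fun j => s₁ + j)).map (fun i =>
        if b = (deckTV s₁ s₂).getD i 0 then 0
        else (((deckTV s₁ s₂).eraseIdx i).permutations').countP (avoidX bs))).sum
        = s₂ * (if b = 2 then 0
            else ((deckTV s₁ (s₂-1)).permutations').countP (avoidX bs)) := by
      rw [List.map_map]
      rw [List.map_congr_left (fun j hj => by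
        show (if b = (deckTV s₁ s₂).getD (s₁ + j) 0 then 0 else _) = _
        rw [deckTV_getD_ge (List.mem_range.1 hj), deckTV_erase_ge (List.mem_range.1 hj)])]
      rw [List.map_const', List.sum_replicate, List.length_range, smul_eq_mul]
    rw [hA, hB]
    simp only [List.length_cons]
    have hlenx : bs.length + 1 ≤ s₁ + s₂ := by simpa using hlen
    rcases hvals b (by simp) with hb | hb
    · -- b = 1 : only second block survives
      subst hb
      norm_num
      rcases Nat.eq_zero_or_pos s₂ with hs2 | hs2
      · subst hs2
        have hcount : bs.count 2 ≤ bs.length := List.count_le_length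
        have hlen1 : bs.length + 1 ≤ s₁ := by simpa using hlen
        rw [zchoose, if_pos (by push_cast; omega),
          show ((s₁ : ℤ) - bs.count 2).toNat = s₁ - bs.count 2 by omega,
          Nat.choose_eq_zero_iff.2 (by omega)]
        simp
      · rw [ih s₁ (s₂ - 1) (by omega) (fun x hx => hvals x (by simp [hx])),
          show s₁ + s₂ - (bs.length + 1) = s₁ + (s₂ - 1) - bs.length by omega]
        rw [show s₂.factorial = s₂ * (s₂-1).factorial by
          rw [← Nat.succ_pred_eq_of_pos hs2]; rfl]
        ring
    · -- b = 2 : only first block survives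
      subst hb
      norm_num
      rcases Nat.eq_zero_or_pos s₁ with hs1 | hs1
      · subst hs1
        rw [zchoose, if_neg (by push_cast; omega)]
        simp
      · rw [ih (s₁ - 1) s₂ (by omega) (fun x hx => hvals x (by simp [hx])),
          show s₁ + s₂ - (bs.length + 1) = (s₁ - 1) + s₂ - bs.length by omega,
          show ((s₁ - 1 : ℕ) : ℤ) - bs.count 2 = (s₁ : ℤ) - (bs.count 2 + 1) by
            push_cast [hs1]; ring]
        rw [show s₁.factorial = s₁ * (s₁-1).factorial by
          rw [← Nat.succ_pred_eq_of_pos hs1]; rfl]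
        push_cast
        ring

lemma deckList_two (s₁ s₂ : ℕ) : deckList [s₁, s₂] = deckTV s₁ s₂ := by
  simp [deckList, deckTV, List.range_succ]

lemma winsAux_eq (bids : List ℕ) :
    ∀ (d hist : List ℕ) (m : ℕ), hist.length + m ≤ bids.length →
      winsAux (fun h => bids.getD h.length 0) hist m d
        = avoidX ((bids.drop hist.length).take m) d := by
  intro d
  induction d with
  | nil =>
    intro hist m _
    cases m with
    | zero => rfl
    | succ m =>
      rw [winsAux]
      rcases (bids.drop hist.length).take (m+1) with _ | ⟨b, bs⟩ <;> rfl
  | cons c rest ih =>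
    intro hist m hm
    cases m with
    | zero => rfl
    | succ m =>
      have hlt : hist.length < bids.length := by omega
      rw [winsAux, List.drop_eq_getElem_cons hlt, List.take_succ_cons, avoidX,
        List.getD_eq_getElem bids 0 hlt]
      have := ih (hist ++ [c]) m (by simp; omega)
      rw [List.length_append] at this
      rw [this]
      rfl

/-- Montmort two-value game with an advance schedule of bids: naming value 1 in `b₁`
rounds and value 2 in `b₂` rounds (in any order), the winning probability is
`C(s₁+s₂-b₁-b₂, s₁-b₂) / C(s₁+s₂, s₁)`; it is nonzero iff `b₁ ≤ s₂` and `b₂ ≤ s₁`. -/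
theorem stmt0 (s₁ s₂ b₁ b₂ : ℕ) (hs : s₂ ≤ s₁) (hm : b₁ + b₂ ≤ s₁ + s₂)
    (bids : List ℕ) (hvals : ∀ x ∈ bids, x = 1 ∨ x = 2)
    (hlen : bids.length = b₁ + b₂) (h1 : bids.count 1 = b₁) (h2 : bids.count 2 = b₂) :
    winProb (fun hist => bids.getD hist.length 0) [s₁, s₂] (b₁ + b₂)
        = (zchoose (s₁ + s₂ - (b₁ + b₂)) ((s₁ : ℤ) - (b₂ : ℤ)) : ℚ)
            / ((s₁ + s₂).choose s₁ : ℚ) ∧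
      (0 < winProb (fun hist => bids.getD hist.length 0) [s₁, s₂] (b₁ + b₂) ↔
        b₁ ≤ s₂ ∧ b₂ ≤ s₁) := by
  have hdl : deckList [s₁, s₂] = deckTV s₁ s₂ := deckList_two s₁ s₂
  have hlenD : (deckTV s₁ s₂).length = s₁ + s₂ := by simp [deckTV]
  have hfun : (fun d => winsAux (fun hist => bids.getD hist.length 0) [] (b₁ + b₂) d)
      = avoidX bids := by
    funext d
    rw [winsAux_eq bids d [] (b₁ + b₂) (by simp [hlen]),
      show [].length = 0 from rfl, List.drop_zero, ← hlen, List.take_length]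
  have hcount : (deckList [s₁, s₂]).permutations.countP
        (fun d => winsAux (fun hist => bids.getD hist.length 0) [] (b₁ + b₂) d)
      = s₁.factorial * s₂.factorial * zchoose (s₁ + s₂ - (b₁ + b₂)) ((s₁ : ℤ) - (b₂ : ℤ)) := by
    rw [hdl, hfun, (List.permutations_perm_permutations' (deckTV s₁ s₂)).countP_eq,
      countAvoid bids s₁ s₂ (by omega) hvals, hlen, h2]
  have hfact : ((s₁ + s₂).factorial : ℚ)
      = ((s₁ + s₂).choose s₁ : ℚ) * s₁.factorial * s₂.factorial := by
    have := Nat.choose_mul_factorial_mul_factorial (Nat.le_add_right s₁ s₂)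
    rw [Nat.add_sub_cancel_left] at this
    rw [← this]; push_cast; ring
  have hchoosepos : (0:ℚ) < ((s₁ + s₂).choose s₁ : ℚ) := by
    exact_mod_cast Nat.choose_pos (Nat.le_add_right s₁ s₂)
  have hwp : winProb (fun hist => bids.getD hist.length 0) [s₁, s₂] (b₁ + b₂)
      = (zchoose (s₁ + s₂ - (b₁ + b₂)) ((s₁ : ℤ) - (b₂ : ℤ)) : ℚ)
          / ((s₁ + s₂).choose s₁ : ℚ) := by
    rw [winProb, hcount, hdl, hlenD, hfact]
    have h1 : (s₁.factorial : ℚ) ≠ 0 := by positivity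
    have h2 : (s₂.factorial : ℚ) ≠ 0 := by positivity
    have h3 : ((s₁ + s₂).choose s₁ : ℚ) ≠ 0 := ne_of_gt hchoosepos
    push_cast
    field_simp
  refine ⟨hwp, ?_⟩
  rw [hwp]
  rw [div_pos_iff_of_pos_right hchoosepos]
  have : (0:ℚ) < (zchoose (s₁ + s₂ - (b₁ + b₂)) ((s₁ : ℤ) - (b₂ : ℤ)) : ℚ)
      ↔ 0 < zchoose (s₁ + s₂ - (b₁ + b₂)) ((s₁ : ℤ) - (b₂ : ℤ)) := by exact_mod_cast Iff.rfl
  rw [this, zchoose]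
  constructor
  · intro h
    by_cases hk : 0 ≤ (s₁ : ℤ) - (b₂ : ℤ)
    · rw [if_pos hk] at h
      have := Nat.choose_eq_zero_iff (n := s₁ + s₂ - (b₁ + b₂)) (k := ((s₁ : ℤ) - (b₂ : ℤ)).toNat)
      have hle : ((s₁ : ℤ) - (b₂ : ℤ)).toNat ≤ s₁ + s₂ - (b₁ + b₂) := by omega
      constructor <;> omega
    · rw [if_neg hk] at h; omega
  · rintro ⟨hb1, hb2⟩
    rw [if_pos (by omega)]
    apply Nat.choose_pos
    omega
end

section
/- Let q and s be non-increasing sequences of non-negative integers of the same length v with equal sums, such that s majorizes q (i.e., every partial sum of s is at least the corresponding partial sum of q). Define P(s,q) as the product over all indices i with sᵢ > qᵢ of the falling factorial sᵢ(sᵢ-1)⋯(qᵢ+1), with empty product equal to 1. Then P(q,s) ≤ P(s,q), with equality if and only if q = s. -/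
section Aux
open Finset

lemma take_sum_eq (s : List ℕ) (k : ℕ) :
    (s.take k).sum = ∑ i ∈ range k, s.getD i 0 := by
  induction s generalizing k with
  | nil => simp
  | cons a t ih =>
    cases k with
    | zero => simp
    | succ k =>
      rw [Finset.sum_range_succ']
      simp [ih]
      omega

lemma map_fact_prod_eq (s : List ℕ) :
    (s.map Nat.factorial).prod = ∏ i ∈ range s.length, (s.getD i 0).factorial := by
  induction s with
  | nil => simp
  | cons a t ih =>
    rw [List.length_cons, Finset.prod_range_succ']
    simp [ih, mul_comm]

lemma sorted_antitone (s : List ℕ) (hs : List.Pairwise (· ≥ ·) s) :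
    Antitone (fun i => s.getD i 0) := by
  intro i j hij
  simp only
  by_cases hj : j < s.length
  · have hi : i < s.length := lt_of_le_of_lt hij hj
    rw [List.getD_eq_getElem _ _ hi, List.getD_eq_getElem _ _ hj]
    rcases eq_or_lt_of_le hij with rfl | hlt
    · exact le_refl _
    · exact List.pairwise_iff_getElem.mp hs i j hi hj hlt
  · rw [List.getD_eq_default _ _ (le_of_not_gt hj)]
    exact Nat.zero_le _

lemma core (g : ℕ → ℕ) (v : ℕ) (hg0 : ∀ i, v ≤ i → g i = 0) (hag : Antitone g) :
    ∀ (n : ℕ) (f : ℕ → ℕ),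
      (∑ m ∈ range (v+1), (∑ i ∈ range m, f i - ∑ i ∈ range m, g i)) = n →
      (∀ i, v ≤ i → f i = 0) → Antitone f →
      (∑ i ∈ range v, g i = ∑ i ∈ range v, f i) →
      (∀ k, ∑ i ∈ range k, g i ≤ ∑ i ∈ range k, f i) →
      f ≠ g →
      ∏ i ∈ range v, (g i).factorial < ∏ i ∈ range v, (f i).factorial := by
  intro n
  induction n using Nat.strong_induction_on with
  | _ n IH =>
  intro f hmeas hf0 haf hsum hmaj hne
  have hex : ∃ i, f i ≠ g i := by
    by_contra h
    push_neg at h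
    exact hne (funext h)
  obtain ⟨k, hk, hkmin⟩ : ∃ k, f k ≠ g k ∧ ∀ i, i < k → f i = g i :=
    ⟨Nat.find hex, Nat.find_spec hex, fun i hi => not_not.mp (Nat.find_min hex hi)⟩
  have hSk : ∑ i ∈ range k, g i = ∑ i ∈ range k, f i :=
    Finset.sum_congr rfl (fun i hi => (hkmin i (mem_range.mp hi)).symm)
  have hgk : g k < f k := by
    rcases Nat.lt_or_ge (g k) (f k) with h | h
    · exact h
    · exfalso
      have h2 := hmaj (k + 1)
      rw [Finset.sum_range_succ, Finset.sum_range_succ] at h2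
      omega
  have hk_lt_v : k < v := by
    by_contra h
    push_neg at h
    rw [hf0 k h, hg0 k h] at hk
    exact hk rfl
  have hexl : ∃ l, f l < g l := by
    by_contra h
    push_neg at h
    have : ∑ i ∈ range v, g i < ∑ i ∈ range v, f i :=
      Finset.sum_lt_sum (fun i _ => h i) ⟨k, mem_range.mpr hk_lt_v, hgk⟩
    omega
  obtain ⟨l, hl, hlmin⟩ : ∃ l, f l < g l ∧ ∀ i, i < l → g i ≤ f i :=
    ⟨Nat.find hexl, Nat.find_spec hexl, fun i hi => le_of_not_gt (Nat.find_min hexl hi)⟩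
  have hkl : k < l := by
    rcases lt_trichotomy k l with h | h | h
    · exact h
    · subst h; omega
    · have := hkmin l h; omega
  have hlv : l < v := by
    by_contra h
    push_neg at h
    rw [hf0 l h, hg0 l h] at hl
    omega
  have hfk2 : f l + 2 ≤ f k := by
    have h1 : g l ≤ g k := hag (le_of_lt hkl)
    omega
  -- k' : rightmost index with f k' = f k
  obtain ⟨k', hk'P, hkk', hk'le, hk'gr⟩ :
      ∃ k', f k' = f k ∧ k ≤ k' ∧ k' ≤ l ∧ ∀ m, k' < m → m ≤ l → f m ≠ f k := by
    refine ⟨Nat.findGreatest (fun i => f i = f k) l,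
      Nat.findGreatest_spec (P := fun i => f i = f k) (le_of_lt hkl) rfl,
      Nat.le_findGreatest (le_of_lt hkl) rfl,
      Nat.findGreatest_le l,
      fun m h1 h2 => Nat.findGreatest_is_greatest (P := fun i => f i = f k) h1 h2⟩
  have hk'l : k' < l := by
    rcases lt_or_eq_of_le hk'le with h | h
    · exact h
    · subst h; omega
  have hK : ∀ j, k' < j → f j ≤ f k - 1 := by
    intro j hj
    have h1 : f (k' + 1) ≠ f k := hk'gr (k' + 1) (Nat.lt_succ_self k') hk'l
    have h2 : f (k' + 1) ≤ f k' := haf (Nat.le_succ k')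
    have h3 : f j ≤ f (k' + 1) := haf hj
    omega
  -- l' : leftmost index with f l' = f l
  have hexl' : ∃ i, f i = f l := ⟨l, rfl⟩
  obtain ⟨l', hl'P, hl'le, hl'min⟩ :
      ∃ l', f l' = f l ∧ l' ≤ l ∧ ∀ i, i < l' → f i ≠ f l :=
    ⟨Nat.find hexl', Nat.find_spec hexl', Nat.find_le rfl,
      fun i hi => Nat.find_min hexl' hi⟩
  have hk'l' : k' < l' := by
    by_contra h
    push_neg at h
    have : f k' ≤ f l' := haf h
    omega
  have hL : ∀ i, i < l' → f l + 1 ≤ f i := by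
    intro i hi
    have h1 : f i ≠ f l := hl'min i hi
    have h2 : f l' ≤ f i := haf (le_of_lt hi)
    omega
  have hl'v : l' < v := lt_of_le_of_lt hl'le hlv
  have hk'v : k' < v := lt_trans hk'l' hl'v
  have hne' : k' ≠ l' := ne_of_lt hk'l'
  -- the transfer f'
  obtain ⟨f', hf'k, hf'l, hf'o⟩ :
      ∃ f' : ℕ → ℕ, f' k' = f k - 1 ∧ f' l' = f l + 1 ∧
        ∀ i, i ≠ k' → i ≠ l' → f' i = f i := by
    refine ⟨fun i => if i = k' then f k - 1 else if i = l' then f l + 1 else f i,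
      by simp, ?_, ?_⟩
    · simp [hne'.symm]
    · intro i h1 h2; simp [h1, h2]
  have haf' : Antitone f' := by
    intro i j hij
    show f' j ≤ f' i
    by_cases hjk : j = k'
    · rw [hjk, hf'k]
      by_cases hik : i = k'
      · rw [hik, hf'k]
      · have hik' : i < k' := by omega
        rw [hf'o i hik (by omega)]
        have : f k' ≤ f i := haf (le_of_lt hik')
        omega
    · by_cases hjl : j = l'
      · rw [hjl, hf'l]
        by_cases hik : i = k'
        · rw [hik, hf'k]; omega
        · by_cases hil : i = l'
          · rw [hil, hf'l]
          · rw [hf'o i hik hil]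
            exact hL i (by omega)
      · rw [hf'o j hjk hjl]
        by_cases hik : i = k'
        · rw [hik, hf'k]
          exact hK j (by omega)
        · by_cases hil : i = l'
          · rw [hil, hf'l]
            have h2 : f j ≤ f l' := haf (by omega)
            omega
          · rw [hf'o i hik hil]
            exact haf hij
  have hf'0 : ∀ i, v ≤ i → f' i = 0 := by
    intro i hi
    rw [hf'o i (by omega) (by omega)]
    exact hf0 i hi
  -- prefix sums of f'
  have hS1 : ∀ m, m ≤ k' → ∑ i ∈ range m, f' i = ∑ i ∈ range m, f i := by
    intro m hm
    exact Finset.sum_congr rfl fun i hi => by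
      have := mem_range.mp hi
      exact hf'o i (by omega) (by omega)
  have hS2 : ∀ m, k' < m → m ≤ l' → (∑ i ∈ range m, f' i) + 1 = ∑ i ∈ range m, f i := by
    intro m h1 h2
    have hmem : k' ∈ range m := mem_range.mpr h1
    rw [← Finset.add_sum_erase _ f' hmem, ← Finset.add_sum_erase _ f hmem]
    have he : ∀ i ∈ (range m).erase k', f' i = f i := by
      intro i hi
      have h3 := Finset.mem_erase.mp hi
      have h4 := mem_range.mp h3.2
      exact hf'o i h3.1 (by omega)
    have e : ∑ i ∈ (range m).erase k', f' i = ∑ i ∈ (range m).erase k', f i :=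
      Finset.sum_congr rfl he
    rw [e, hf'k, hk'P]
    omega
  have hS3 : ∀ m, l' < m → ∑ i ∈ range m, f' i = ∑ i ∈ range m, f i := by
    intro m hm
    have hk'm : k' ∈ range m := mem_range.mpr (by omega)
    have hl'm : l' ∈ (range m).erase k' :=
      Finset.mem_erase.mpr ⟨hne'.symm, mem_range.mpr hm⟩
    rw [← Finset.add_sum_erase _ f' hk'm, ← Finset.add_sum_erase _ f hk'm,
        ← Finset.add_sum_erase _ f' hl'm, ← Finset.add_sum_erase _ f hl'm]
    have he : ∀ i ∈ ((range m).erase k').erase l', f' i = f i := by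
      intro i hi
      have h3 := Finset.mem_erase.mp hi
      have h4 := Finset.mem_erase.mp h3.2
      exact hf'o i h4.1 h3.1
    have e : ∑ i ∈ ((range m).erase k').erase l', f' i
        = ∑ i ∈ ((range m).erase k').erase l', f i := Finset.sum_congr rfl he
    rw [e, hf'k, hf'l, hk'P, hl'P]
    omega
  have hmaj' : ∀ m, ∑ i ∈ range m, g i ≤ ∑ i ∈ range m, f' i := by
    intro m
    rcases le_or_gt m k' with h | h
    · rw [hS1 m h]; exact hmaj m
    rcases le_or_gt m l' with h2 | h2
    · have hkm : k + 1 ≤ m := by omega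
      have hml : m ≤ l := le_trans h2 hl'le
      have e1 : ∑ i ∈ Finset.range (k+1), f i + ∑ i ∈ Finset.Ico (k+1) m, f i
          = ∑ i ∈ Finset.range m, f i := by
        rw [Finset.range_eq_Ico, Finset.range_eq_Ico]
        exact Finset.sum_Ico_consecutive _ (Nat.zero_le _) hkm
      have e2 : ∑ i ∈ Finset.range (k+1), g i + ∑ i ∈ Finset.Ico (k+1) m, g i
          = ∑ i ∈ Finset.range m, g i := by
        rw [Finset.range_eq_Ico, Finset.range_eq_Ico]
        exact Finset.sum_Ico_consecutive _ (Nat.zero_le _) hkm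
      have e3 : ∑ i ∈ Finset.Ico (k+1) m, g i ≤ ∑ i ∈ Finset.Ico (k+1) m, f i := by
        refine Finset.sum_le_sum fun i hi => ?_
        have := Finset.mem_Ico.mp hi
        exact hlmin i (by omega)
      have e4 : (∑ i ∈ range (k+1), g i) + 1 ≤ ∑ i ∈ range (k+1), f i := by
        rw [Finset.sum_range_succ, Finset.sum_range_succ]
        omega
      have e5 := hS2 m h h2
      omega
    · rw [hS3 m h2]; exact hmaj m
  have hsum' : ∑ i ∈ range v, g i = ∑ i ∈ range v, f' i := by
    rw [hS3 v hl'v]; exact hsum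
  -- the product inequality for the single transfer
  have hQpos : 0 < ∏ i ∈ range v, (f i).factorial :=
    Finset.prod_pos fun i _ => Nat.factorial_pos _
  have hprod : (∏ i ∈ range v, (f' i).factorial) * f k
      = (∏ i ∈ range v, (f i).factorial) * (f l + 1) := by
    have hk'm : k' ∈ range v := mem_range.mpr hk'v
    have hl'm : l' ∈ (range v).erase k' :=
      Finset.mem_erase.mpr ⟨hne'.symm, mem_range.mpr hl'v⟩
    rw [← Finset.mul_prod_erase _ _ hk'm, ← Finset.mul_prod_erase _ (fun i => (f i).factorial) hk'm,
        ← Finset.mul_prod_erase _ _ hl'm, ← Finset.mul_prod_erase _ (fun i => (f i).factorial) hl'm]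
    have he : ∀ i ∈ ((range v).erase k').erase l', (f' i).factorial = (f i).factorial := by
      intro i hi
      have h3 := Finset.mem_erase.mp hi
      have h4 := Finset.mem_erase.mp h3.2
      rw [hf'o i h4.1 h3.1]
    have e : ∏ i ∈ ((range v).erase k').erase l', (f' i).factorial
        = ∏ i ∈ ((range v).erase k').erase l', (f i).factorial := Finset.prod_congr rfl he
    rw [e, hf'k, hf'l, hk'P, hl'P]
    have h1 : (f k - 1).factorial * f k = (f k).factorial := by
      rw [mul_comm]
      exact Nat.mul_factorial_pred (by omega)
    calc (f k - 1).factorial * ((f l + 1).factorial *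
            ∏ i ∈ ((range v).erase k').erase l', (f i).factorial) * f k
        = ((f k - 1).factorial * f k) * ((f l + 1).factorial *
            ∏ i ∈ ((range v).erase k').erase l', (f i).factorial) := by ring
      _ = (f k).factorial * (((f l + 1) * (f l).factorial) *
            ∏ i ∈ ((range v).erase k').erase l', (f i).factorial) := by
          rw [h1, Nat.factorial_succ]
      _ = (f k).factorial * ((f l).factorial *
            ∏ i ∈ ((range v).erase k').erase l', (f i).factorial) * (f l + 1) := by ring
  have hlt : ∏ i ∈ range v, (f' i).factorial < ∏ i ∈ range v, (f i).factorial := by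
    have h2 : (∏ i ∈ range v, (f' i).factorial) * f k
        < (∏ i ∈ range v, (f i).factorial) * f k := by
      rw [hprod]
      exact mul_lt_mul_of_pos_left (by omega) hQpos
    exact Nat.lt_of_mul_lt_mul_right h2
  -- measure decreases
  have hmeas_le : ∀ m, ∑ i ∈ range m, f' i ≤ ∑ i ∈ range m, f i := by
    intro m
    rcases le_or_gt m k' with h | h
    · rw [hS1 m h]
    rcases le_or_gt m l' with h2 | h2
    · have := hS2 m h h2; omega
    · rw [hS3 m h2]
  have hNlt : (∑ m ∈ range (v+1), (∑ i ∈ range m, f' i - ∑ i ∈ range m, g i)) < n := by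
    rw [← hmeas]
    apply Finset.sum_lt_sum
    · intro m _
      exact Nat.sub_le_sub_right (hmeas_le m) _
    · refine ⟨l', mem_range.mpr (by omega), ?_⟩
      have h2 := hS2 l' hk'l' (le_refl _)
      have h3 := hmaj' l'
      omega
  by_cases hfg : f' = g
  · rw [← hfg]; exact hlt
  · exact lt_trans (IH _ hNlt f' rfl hf'0 haf' hsum' hmaj' hfg) hlt

lemma Pfun_pos (s q : List ℕ) : 0 < Pfun s q := by
  induction s generalizing q with
  | nil => simp [Pfun]
  | cons a t ih =>
    cases q with
    | nil => simp [Pfun]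
    | cons b r =>
      rw [Pfun, List.zipWith_cons_cons, List.prod_cons]
      refine Nat.mul_pos ?_ (ih r)
      split
      · exact Nat.div_pos (Nat.factorial_le (le_of_lt ‹_›)) (Nat.factorial_pos _)
      · exact one_pos

lemma Pfun_mul (s q : List ℕ) (h : s.length = q.length) :
    Pfun s q * (q.map Nat.factorial).prod =
      ((List.zipWith max s q).map Nat.factorial).prod := by
  induction s generalizing q with
  | nil =>
    cases q with
    | nil => simp [Pfun]
    | cons b r => simp at h
  | cons a t ih =>
    cases q with
    | nil => simp at h
    | cons b r =>
      simp only [List.length_cons, Nat.succ_inj] at h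
      rw [Pfun, List.zipWith_cons_cons, List.prod_cons, List.zipWith_cons_cons,
        List.map_cons, List.prod_cons, List.map_cons, List.prod_cons]
      have key : (if b < a then a.factorial / b.factorial else 1) * b.factorial
          = (max a b).factorial := by
        split
        · rw [Nat.div_mul_cancel (Nat.factorial_dvd_factorial (le_of_lt ‹_›))]
          rw [max_eq_left (le_of_lt ‹_›)]
        · rw [max_eq_right (le_of_not_gt ‹_›)]
          exact one_mul _
      calc (if b < a then a.factorial / b.factorial else 1) * Pfun t r *
            (b.factorial * (r.map Nat.factorial).prod)
          = ((if b < a then a.factorial / b.factorial else 1) * b.factorial) *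
            (Pfun t r * (r.map Nat.factorial).prod) := by ring
        _ = _ := by rw [key, ih r h]

lemma Pfun_cross (s q : List ℕ) (h : s.length = q.length) :
    Pfun s q * (q.map Nat.factorial).prod = Pfun q s * (s.map Nat.factorial).prod := by
  rw [Pfun_mul s q h, Pfun_mul q s h.symm,
    List.zipWith_comm_of_comm Nat.max_comm]
end Aux

/-- If `s` majorizes `q` (non-increasing, equal length and sum), then
`P(q,s) ≤ P(s,q)`, with equality iff `q = s`. -/
theorem stmt2 (v : ℕ) (q s : List ℕ) (hql : q.length = v) (hsl : s.length = v)
    (hqs : List.Pairwise (· ≥ ·) q) (hss : List.Pairwise (· ≥ ·) s)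
    (hsum : q.sum = s.sum) (hmaj : Majorizes s q) :
    Pfun q s ≤ Pfun s q ∧ (q ≠ s → Pfun q s < Pfun s q) := by
  by_cases hqs2 : q = s
  · subst hqs2
    exact ⟨le_refl _, fun h => absurd rfl h⟩
  · have hQS : (q.map Nat.factorial).prod < (s.map Nat.factorial).prod := by
      rw [map_fact_prod_eq, map_fact_prod_eq, hql, hsl]
      refine core (fun i => q.getD i 0) v ?_ (sorted_antitone q hqs) _
        (fun i => s.getD i 0) rfl ?_ (sorted_antitone s hss) ?_ ?_ ?_
      · intro i hi
        exact List.getD_eq_default _ _ (by omega)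
      · intro i hi
        exact List.getD_eq_default _ _ (by omega)
      · have e1 : (q.take v).sum = q.sum := by rw [← hql, List.take_length]
        have e2 : (s.take v).sum = s.sum := by rw [← hsl, List.take_length]
        rw [← take_sum_eq, ← take_sum_eq, e1, e2]
        exact hsum
      · intro m
        rw [← take_sum_eq, ← take_sum_eq]
        exact hmaj m
      · intro h
        apply hqs2
        apply List.ext_getElem (by omega)
        intro i h1 h2
        have := congrFun h i
        rw [List.getD_eq_getElem _ _ h2, List.getD_eq_getElem _ _ h1] at this
        exact this.symm
    have hcross := Pfun_cross s q (by omega)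
    have h1 : Pfun q s * (q.map Nat.factorial).prod
        < Pfun q s * (s.map Nat.factorial).prod :=
      mul_lt_mul_of_pos_left hQS (Pfun_pos q s)
    rw [← hcross] at h1
    have hlt : Pfun q s < Pfun s q := Nat.lt_of_mul_lt_mul_right h1
    exact ⟨le_of_lt hlt, fun _ => hlt⟩
end

section
/- Let s and q be non-increasing sequences of non-negative integers of length v with equal sums and s majorizing q, q ≠ s, and suppose there exists an index i ∈ [v-1] with s₁+⋯+sᵢ = q₁+⋯+qᵢ. Writing s = s'⌢s'' and q = q'⌢q'' split at position i, then s' majorizes q', s'' majorizes q'', and P(s,q) = P(s',q')·P(s'',q'') and P(q,s) = P(q',s')·P(q'',s''). -/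
/-- Splitting a majorization pair at a position where the partial sums agree. -/
theorem stmt6 (v : ℕ) (s q : List ℕ) (hsl : s.length = v) (hql : q.length = v)
    (hss : List.Pairwise (· ≥ ·) s) (hqs : List.Pairwise (· ≥ ·) q)
    (hsum : s.sum = q.sum) (hmaj : Majorizes s q) (hne : q ≠ s)
    (i : ℕ) (hi1 : 1 ≤ i) (hi2 : i ≤ v - 1)
    (heq : (s.take i).sum = (q.take i).sum) :
    Majorizes (s.take i) (q.take i) ∧ Majorizes (s.drop i) (q.drop i) ∧
      Pfun s q = Pfun (s.take i) (q.take i) * Pfun (s.drop i) (q.drop i) ∧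
      Pfun q s = Pfun (q.take i) (s.take i) * Pfun (q.drop i) (s.drop i) := by
  have hiv : i ≤ v := le_trans hi2 (Nat.sub_le v 1)
  have hlen : (s.take i).length = (q.take i).length := by simp [hsl, hql]
  have hzip : ∀ (f : ℕ → ℕ → ℕ) (a b : List ℕ),
      (a.take i).length = (b.take i).length →
      List.zipWith f a b =
        List.zipWith f (a.take i) (b.take i) ++ List.zipWith f (a.drop i) (b.drop i) := by
    intro f a b h
    conv_lhs => rw [← List.take_append_drop i a, ← List.take_append_drop i b]
    rw [List.zipWith_append h]
  have hlen2 : (q.take i).length = (s.take i).length := hlen.symm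
  refine ⟨?_, ?_, ?_, ?_⟩
  · intro j
    rcases le_or_gt j i with hj | hj
    · rw [List.take_take, List.take_take, min_eq_left hj]
      exact hmaj j
    · rw [List.take_take, List.take_take, min_eq_right hj.le, heq]
  · intro j
    have h1 := hmaj (i + j)
    have hq2 : (q.take i).sum + ((q.drop i).take j).sum = (q.take (i+j)).sum := by
      rw [List.take_add, List.sum_append]
    have hs2 : (s.take i).sum + ((s.drop i).take j).sum = (s.take (i+j)).sum := by
      rw [List.take_add, List.sum_append]
    omega
  · show (List.zipWith _ s q).prod = _
    rw [hzip _ s q hlen, List.prod_append]; rfl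
  · show (List.zipWith _ q s).prod = _
    rw [hzip _ q s hlen2, List.prod_append]; rfl
end

section
/- Consider the m-round game on a deck of composition s = (s₁,…,s_v) with s₁ ≥ ⋯ ≥ s_v ≥ 1 and total c = Σsᵢ. The minimum winning probability over adaptive strategies is 0 if and only if m > c - s₁. -/
lemma deckList_cons (x : ℕ) (s : List ℕ) :
    deckList (x :: s) = List.replicate x 1 ++ (deckList s).map (· + 1) := by
  simp [deckList, List.range_succ_eq_map, List.flatMap_map, List.map_flatMap,
    List.map_replicate, Function.comp]

lemma deckList_length (s : List ℕ) : (deckList s).length = s.sum := by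
  induction s with
  | nil => simp [deckList]
  | cons x s ih => simp [deckList_cons, ih]

lemma mem_deckList_pos (s : List ℕ) : ∀ y ∈ deckList s, 1 ≤ y := by
  induction s with
  | nil => simp [deckList]
  | cons x s ih =>
    simp only [deckList_cons, List.mem_append, List.mem_replicate, List.mem_map]
    rintro y (⟨-, rfl⟩ | ⟨z, hz, rfl⟩) <;> omega

lemma count_one_deckList (s : List ℕ) : (deckList s).count 1 = s.getD 0 0 := by
  cases s with
  | nil => simp [deckList]
  | cons x s =>
    rw [deckList_cons, List.count_append]
    have h0 : ((deckList s).map (· + 1)).count 1 = 0 := by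
      rw [List.count_eq_zero]
      intro h
      obtain ⟨y, hy, hy1⟩ := List.mem_map.mp h
      have := mem_deckList_pos s y hy
      omega
    simp [h0, List.count_replicate]

lemma count_deckList_le (s : List ℕ) (hss : List.Pairwise (· ≥ ·) s) (a : ℕ) :
    (deckList s).count a ≤ s.getD 0 0 := by
  induction s generalizing a with
  | nil => simp [deckList]
  | cons x s ih =>
    rw [deckList_cons, List.count_append]
    rcases eq_or_ne a 1 with rfl | ha1
    · have h0 : ((deckList s).map (· + 1)).count 1 = 0 := by
        rw [List.count_eq_zero]
        intro h
        obtain ⟨y, hy, hy1⟩ := List.mem_map.mp h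
        have := mem_deckList_pos s y hy
        omega
      simp [h0, List.count_replicate]
    · have hr : (List.replicate x 1).count a = 0 := by
        rw [List.count_eq_zero]
        intro h
        exact ha1 (List.eq_of_mem_replicate h)
      rw [hr, Nat.zero_add]
      rcases a with _ | b
      · have h0 : ((deckList s).map (· + 1)).count 0 = 0 := by
          rw [List.count_eq_zero]
          intro h
          obtain ⟨y, hy, hy1⟩ := List.mem_map.mp h
          omega
        simp [h0]
      · have : ((deckList s).map (· + 1)).count (b + 1) = (deckList s).count b := by
          exact List.count_map_of_injective _ _ (fun a b h => by omega) b
        rw [this]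
        have htail := ih (List.Pairwise.of_cons hss) b
        have hle : s.getD 0 0 ≤ x := by
          cases s with
          | nil => simp
          | cons y s => exact (List.pairwise_cons.mp hss).1 y (by simp)
        simpa using le_trans htail hle

lemma winsAux_take (strat : List ℕ → ℕ) (m : ℕ) (hist d : List ℕ) :
    winsAux strat hist m d = winsAux strat hist m (d.take m) := by
  induction m generalizing hist d with
  | zero => simp [winsAux]
  | succ m ih =>
    cases d with
    | nil => simp
    | cons c rest => simp [winsAux, ih (hist ++ [c]) rest]

lemma winsAux_snoc (strat : List ℕ → ℕ) (hist h : List ℕ) (x : ℕ)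
    (hw : winsAux strat hist h.length h = true) (hx : strat (hist ++ h) ≠ x) :
    winsAux strat hist (h.length + 1) (h ++ [x]) = true := by
  induction h generalizing hist with
  | nil =>
    simp only [List.append_nil] at hx
    simp [winsAux, hx]
  | cons c h ih =>
    simp only [List.length_cons, List.cons_append, winsAux, Bool.and_eq_true,
      bne_iff_ne, ne_eq] at hw ⊢
    refine ⟨hw.1, ih (hist ++ [c]) ?_ ?_⟩
    · exact hw.2
    · simpa using hx

lemma winsAux_const_false (b : ℕ) (m : ℕ) (hist d : List ℕ) (hb : b ∈ d.take m) :
    winsAux (fun _ => b) hist m d = false := by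
  induction m generalizing hist d with
  | zero => simp at hb
  | succ m ih =>
    cases d with
    | nil => simp at hb
    | cons c rest =>
      simp only [List.take_succ_cons, List.mem_cons] at hb
      rcases hb with rfl | hb
      · simp [winsAux]
      · simp [winsAux, ih (hist ++ [c]) rest hb]

/-- The minimum winning probability over adaptive strategies is `0` iff `m > c - s₁`. -/
theorem stmt8 (v m : ℕ) (s : List ℕ) (hsl : s.length = v)
    (hss : List.Pairwise (· ≥ ·) s) (hpos : ∀ x ∈ s, 1 ≤ x)
    (c : ℕ) (hc : c = s.sum) (hm : m ≤ c) :
    (∃ strat : List ℕ → ℕ, winProb strat s m = 0) ↔ c - s.getD 0 0 < m := by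
  set l := deckList s with hl
  have hlc : l.length = c := by rw [hl, deckList_length, hc]
  have hfac : ((l.length.factorial : ℚ)) ≠ 0 := by
    exact_mod_cast Nat.factorial_ne_zero _
  have hzero : ∀ strat, winProb strat s m = 0 ↔
      (l.permutations.countP fun d => winsAux strat [] m d) = 0 := by
    intro strat
    rw [winProb, div_eq_zero_iff]
    simp [hfac, ← hl]
  constructor
  · rintro ⟨strat, h0⟩
    by_contra hle
    push_neg at hle
    -- m ≤ c - s₁
    have hcount := hzero strat |>.mp h0
    rw [List.countP_eq_zero] at hcount
    -- build winning history
    have claim : ∀ t, t ≤ m → ∃ h : List ℕ, h.length = t ∧ h.Subperm l ∧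
        winsAux strat [] t h = true := by
      intro t
      induction t with
      | zero => exact fun _ => ⟨[], rfl, List.nil_subperm, rfl⟩
      | succ t ih =>
        intro ht
        obtain ⟨h, hlen, hsub, hwin⟩ := ih (by omega)
        have hmle : (↑h : Multiset ℕ) ≤ ↑l := Multiset.coe_le.mpr hsub
        set M : Multiset ℕ := (↑l : Multiset ℕ) - ↑h with hM
        have hcard : Multiset.card M = c - t := by
          rw [hM, Multiset.card_sub hmle]
          simp [hlc, hlen]
        set b := strat h with hb
        have hcountb : Multiset.count b M ≤ s.getD 0 0 := by
          calc Multiset.count b M ≤ Multiset.count b (↑l : Multiset ℕ) := by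
                rw [hM, Multiset.count_sub]; omega
            _ = l.count b := by simp
            _ ≤ s.getD 0 0 := count_deckList_le s hss b
        have hex : ∃ x ∈ M, x ≠ b := by
          by_contra hno
          push_neg at hno
          have := Multiset.eq_replicate_card.mpr hno
          have hcb : Multiset.count b M = c - t := by
            rw [this, Multiset.count_replicate, hcard]; simp
          have hs1c : s.getD 0 0 ≤ c := by
            cases s with
            | nil => simp
            | cons y s => simp [hc]
          omega
        obtain ⟨x, hxM, hxb⟩ := hex
        have hxcount : h.count x < l.count x := by
          have := Multiset.count_pos.mpr hxM
          rw [hM, Multiset.count_sub] at this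
          have h1 : Multiset.count x (↑h : Multiset ℕ) = h.count x := by simp
          have h2 : Multiset.count x (↑l : Multiset ℕ) = l.count x := by simp
          omega
        refine ⟨h ++ [x], by simp [hlen], ?_, ?_⟩
        · rw [List.subperm_ext_iff]
          intro y hy
          rw [List.count_append]
          rcases eq_or_ne y x with rfl | hyx
          · simpa using hxcount
          · have h0 : List.count y [x] = 0 := List.count_eq_zero.mpr (by simp [hyx])
            rw [h0, Nat.add_zero]
            have hyh : y ∈ h := by
              rcases List.mem_append.mp hy with h' | h'
              · exact h'
              · simp at h'; omega
            simpa using List.subperm_ext_iff.mp hsub y hyh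
        · have := winsAux_snoc strat [] h x (by rw [hlen]; exact hwin)
            (by simpa using fun e => hxb e.symm)
          simpa [hlen] using this
    obtain ⟨h, hlen, hsub, hwin⟩ := claim m le_rfl
    -- extend to a full permutation
    set rest := ((↑l : Multiset ℕ) - ↑h).toList with hrest
    have hperm : (h ++ rest).Perm l := by
      rw [← Multiset.coe_eq_coe, ← Multiset.coe_add, hrest, Multiset.coe_toList,
        add_tsub_cancel_of_le (Multiset.coe_le.mpr hsub)]
    have hwinfull : winsAux strat [] m (h ++ rest) = true := by
      rw [winsAux_take, ← hlen, List.take_left, hlen]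
      exact hwin
    exact hcount (h ++ rest) (List.mem_permutations.mpr hperm) hwinfull
  · intro hlt
    refine ⟨fun _ => 1, (hzero _).mpr ?_⟩
    rw [List.countP_eq_zero]
    intro d hd
    have hperm : d.Perm l := List.mem_permutations.mp hd
    have hdlen : d.length = c := by rw [hperm.length_eq, hlc]
    have hcount1 : d.count 1 = s.getD 0 0 := by
      rw [hperm.count_eq, hl, count_one_deckList]
    have hmem : 1 ∈ d.take m := by
      by_contra hno
      have hsplit : d.count 1 = (d.take m).count 1 + (d.drop m).count 1 := by
        conv_lhs => rw [← List.take_append_drop m d]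
        rw [List.count_append]
      have h00 : (d.take m).count 1 = 0 := List.count_eq_zero.mpr hno
      have hle' : (d.drop m).count 1 ≤ d.length - m := by
        simpa using List.count_le_length (l := d.drop m) (a := 1)
      omega
    simp [winsAux_const_false 1 m [] d hmem]
end
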